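/- Let (Ω, ℙ) be a probability space and let X : Ω → ℝ be a measurable function such that a ≤ X ≤ b almost everywhere for some constants 0 < a ≤ b, and such that ∫ log X dℙ < −κ for some real number κ. Then there exists σ₀ > 0 such that for every σ ∈ (0, σ₀], ∫ X^σ dℙ < e^{−σκ}. -/

import Mathlib

open MeasureTheory

lemma exp_le_one_add_add_sq {x : ℝ} (hx : |x| ≤ 1) : Real.exp x ≤ 1 + x + x ^ 2 := by
  have h := Real.exp_bound hx (n := 2) (by norm_num)
  simp only [Finset.sum_range_succ, Finset.sum_range_zero] at h
  norm_num at h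
  rw [abs_le] at h
  nlinarith [sq_abs x, abs_nonneg x]

/-- If `a ≤ X ≤ b` almost surely with `0 < a ≤ b` and `∫ log X < -κ`, then there is
`σ₀ > 0` such that `∫ X^σ < e^{-σκ}` for all `σ ∈ (0, σ₀]`. -/
theorem stmt5 {Ω : Type*} [MeasurableSpace Ω] (ℙ : Measure Ω) [IsProbabilityMeasure ℙ]
    (X : Ω → ℝ) (hX : Measurable X) (a b : ℝ) (ha : 0 < a) (hab : a ≤ b)
    (hbound : ∀ᵐ ω ∂ℙ, X ω ∈ Set.Icc a b)
    (κ : ℝ) (hκ : (∫ ω, Real.log (X ω) ∂ℙ) < -κ) :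
    ∃ σ₀ > (0 : ℝ), ∀ σ : ℝ, 0 < σ → σ ≤ σ₀ →
      (∫ ω, (X ω) ^ σ ∂ℙ) < Real.exp (-σ * κ) := by
  set L : Ω → ℝ := fun ω => Real.log (X ω) with hL
  set I : ℝ := ∫ ω, L ω ∂ℙ with hI
  set M : ℝ := max 1 (max |Real.log a| |Real.log b|) with hM
  have hM1 : (1 : ℝ) ≤ M := le_max_left _ _
  have hM0 : (0 : ℝ) < M := lt_of_lt_of_le one_pos hM1
  -- a.e. bound on |L|
  have hLbdd : ∀ᵐ ω ∂ℙ, |L ω| ≤ M := by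
    filter_upwards [hbound] with ω hω
    have h1 : Real.log a ≤ L ω := Real.log_le_log ha hω.1
    have h2 : L ω ≤ Real.log b := Real.log_le_log (lt_of_lt_of_le ha hω.1) hω.2
    rw [abs_le]
    constructor
    · have := neg_abs_le (Real.log a)
      have h3 : |Real.log a| ≤ M := le_trans (le_max_left _ _) (le_max_right _ _)
      linarith
    · have := le_abs_self (Real.log b)
      have h3 : |Real.log b| ≤ M := le_trans (le_max_right _ _) (le_max_right _ _)
      linarith
  have hLmeas : Measurable L := Real.measurable_log.comp hX
  have hLint : Integrable L ℙ := by
    refine ⟨hLmeas.aestronglyMeasurable, HasFiniteIntegral.of_bounded (C := M) ?_⟩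
    filter_upwards [hLbdd] with ω h using h
  set δ : ℝ := -κ - I with hδdef
  have hδ : 0 < δ := by simp only [hδdef]; linarith
  refine ⟨min (1 / M) (δ / (4 * M ^ 2)), lt_min (by positivity) (by positivity), ?_⟩
  intro σ hσ0 hσle
  have hσM : σ * M ≤ 1 := by
    have h1 : σ ≤ 1 / M := le_trans hσle (min_le_left _ _)
    have := (le_div_iff₀ hM0).mp h1
    linarith
  have hσδ : σ ≤ δ / (4 * M ^ 2) := le_trans hσle (min_le_right _ _)
  -- pointwise bound: X^σ ≤ 1 + σ L + 2 σ² M²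
  have hpt : ∀ᵐ ω ∂ℙ, (X ω) ^ σ ≤ 1 + σ * L ω + 2 * σ ^ 2 * M ^ 2 := by
    filter_upwards [hbound, hLbdd] with ω hω hLω
    have hXpos : 0 < X ω := lt_of_lt_of_le ha hω.1
    rw [Real.rpow_def_of_pos hXpos]
    have habs : |σ * L ω| ≤ 1 := by
      rw [abs_mul, abs_of_pos hσ0]
      calc σ * |L ω| ≤ σ * M := by nlinarith
      _ ≤ 1 := hσM
    have h := exp_le_one_add_add_sq habs
    have hsq : (σ * L ω) ^ 2 ≤ σ ^ 2 * M ^ 2 := by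
      have : |L ω| ^ 2 ≤ M ^ 2 := by nlinarith [abs_nonneg (L ω), sq_abs (L ω)]
      rw [mul_pow]
      nlinarith [sq_abs (L ω), sq_nonneg σ]
    rw [mul_comm (Real.log (X ω)) σ]
    nlinarith [sq_nonneg σ]
  -- integrability of X^σ
  have hXσint : Integrable (fun ω => (X ω) ^ σ) ℙ := by
    have hmeas : Measurable (fun ω => Real.exp (L ω * σ)) :=
      (hLmeas.mul_const σ).exp
    have heq : (fun ω => Real.exp (L ω * σ)) =ᵐ[ℙ] (fun ω => (X ω) ^ σ) := by
      filter_upwards [hbound] with ω hω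
      rw [Real.rpow_def_of_pos (lt_of_lt_of_le ha hω.1)]
    refine (Integrable.congr ⟨hmeas.aestronglyMeasurable, HasFiniteIntegral.of_bounded
      (C := Real.exp 1) ?_⟩ heq)
    filter_upwards [hLbdd] with ω hLω
    rw [Real.norm_eq_abs, abs_of_pos (Real.exp_pos _)]
    apply Real.exp_le_exp.mpr
    calc L ω * σ ≤ |L ω| * σ := by nlinarith [le_abs_self (L ω)]
    _ ≤ M * σ := by nlinarith
    _ ≤ 1 := by linarith [hσM]
  have hgint : Integrable (fun ω => 1 + σ * L ω + 2 * σ ^ 2 * M ^ 2) ℙ :=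
    ((integrable_const 1).add (hLint.const_mul σ)).add (integrable_const _)
  have hle : (∫ ω, (X ω) ^ σ ∂ℙ) ≤ 1 + σ * I + 2 * σ ^ 2 * M ^ 2 := by
    calc (∫ ω, (X ω) ^ σ ∂ℙ) ≤ ∫ ω, (1 + σ * L ω + 2 * σ ^ 2 * M ^ 2) ∂ℙ :=
          integral_mono_ae hXσint hgint hpt
    _ = 1 + σ * I + 2 * σ ^ 2 * M ^ 2 := by
          have : (fun ω => 1 + σ * L ω + 2 * σ ^ 2 * M ^ 2)
              = (fun ω => σ * L ω + (1 + 2 * σ ^ 2 * M ^ 2)) := by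
            funext ω; ring
          rw [this, integral_add (hLint.const_mul σ) (integrable_const _),
            integral_const_mul, integral_const]
          simp only [hI, smul_eq_mul, measure_univ, probReal_univ, ENNReal.toReal_one, one_mul]
          ring
  have hfin : 1 + σ * I + 2 * σ ^ 2 * M ^ 2 < 1 - σ * κ := by
    have h2 : 2 * σ * M ^ 2 ≤ δ / 2 := by
      have h3 := (le_div_iff₀ (by positivity : (0:ℝ) < 4 * M ^ 2)).mp hσδ
      nlinarith
    have : I = -κ - δ := by linarith
    nlinarith
  have hexp : 1 - σ * κ ≤ Real.exp (-σ * κ) := by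
    have := Real.add_one_le_exp (-σ * κ)
    linarith
  linarith
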